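/- arXiv:1205.1595 — 2 statements merged into one kernel-verified Lean document; each statement's English description precedes it below -/
import Mathlib

section
/- If f − E_k[f] ≤ 1 pointwise for every k ∈ {1,…,n}, then for every β > 0, S_f(β) ≤ (β e^β − e^β + 1) · E_{βf}[ Σ²(f) ], where Σ²(f) = Σ_{k=1}^n σ²_k[f] is the sum of the conditional variances. -/
open MeasureTheory Real

section ProductSpace

variable {n : ℕ} {Ω : Fin n → Type*} [∀ k, MeasurableSpace (Ω k)]

/-- Thermal expectation `E_{βf}[g] = E[g e^{βf}] / E[e^{βf}]`. -/
noncomputable def thermalExp {α : Type*} [MeasurableSpace α] (ν : Measure α)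
    (β : ℝ) (f g : α → ℝ) : ℝ :=
  (∫ x, g x * Real.exp (β * f x) ∂ν) / ∫ x, Real.exp (β * f x) ∂ν

/-- Canonical entropy `S_f(β) = β E_{βf}[f] − ln Z_{βf}`. -/
noncomputable def canEntropy {α : Type*} [MeasurableSpace α] (ν : Measure α)
    (f : α → ℝ) (β : ℝ) : ℝ :=
  β * thermalExp ν β f f - Real.log (∫ x, Real.exp (β * f x) ∂ν)

/-- Conditional expectation `E_k[g](x) = ∫ g(x_{y,k}) dμ_k(y)`. -/
noncomputable def condExpK (μ : ∀ k, Measure (Ω k)) (k : Fin n)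
    (g : (∀ i, Ω i) → ℝ) (x : ∀ i, Ω i) : ℝ :=
  ∫ y, g (Function.update x k y) ∂(μ k)

/-- Conditional thermal expectation `E_{k,βf}[g](x) = E_k[g e^{βf}](x) / E_k[e^{βf}](x)`. -/
noncomputable def condThermalExpK (μ : ∀ k, Measure (Ω k)) (k : Fin n) (β : ℝ)
    (f g : (∀ i, Ω i) → ℝ) (x : ∀ i, Ω i) : ℝ :=
  (∫ y, g (Function.update x k y) * Real.exp (β * f (Function.update x k y)) ∂(μ k)) /
    ∫ y, Real.exp (β * f (Function.update x k y)) ∂(μ k)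

/-- Conditional entropy `S_{k,f}(β)(x) = β E_{k,βf}[f](x) − ln Z_{k,βf}(x)`. -/
noncomputable def condEntropyK (μ : ∀ k, Measure (Ω k)) (k : Fin n)
    (f : (∀ i, Ω i) → ℝ) (β : ℝ) (x : ∀ i, Ω i) : ℝ :=
  β * condThermalExpK μ k β f f x -
    Real.log (∫ y, Real.exp (β * f (Function.update x k y)) ∂(μ k))

/-- Conditional variance `σ²_k[g](x) = E_k[(g − E_k[g])²](x)`. -/
noncomputable def condVarK (μ : ∀ k, Measure (Ω k)) (k : Fin n)
    (g : (∀ i, Ω i) → ℝ) (x : ∀ i, Ω i) : ℝ :=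
  ∫ y, (g (Function.update x k y) - condExpK μ k g x) ^ 2 ∂(μ k)

/-- Conditional supremum `(sup_k g)(x) = sup_{y} g(x_{y,k})`. -/
noncomputable def condSupK (k : Fin n) (g : (∀ i, Ω i) → ℝ) (x : ∀ i, Ω i) : ℝ :=
  ⨆ y : Ω k, g (Function.update x k y)

/-- Conditional infimum `(inf_k g)(x) = inf_{y} g(x_{y,k})`. -/
noncomputable def condInfK (k : Fin n) (g : (∀ i, Ω i) → ℝ) (x : ∀ i, Ω i) : ℝ :=
  ⨅ y : Ω k, g (Function.update x k y)

/-- Worst-case variance proxy `Dg = Σ_k (g − inf_k g)²`. -/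
noncomputable def Dproxy (g : (∀ i, Ω i) → ℝ) (x : ∀ i, Ω i) : ℝ :=
  ∑ k, (g x - condInfK k g x) ^ 2

end ProductSpace


section PsiAux

noncomputable def psiBLM (t : ℝ) : ℝ := t * Real.exp t - Real.exp t + 1

lemma psiBLM_hasDeriv (t : ℝ) : HasDerivAt psiBLM (t * Real.exp t) t := by
  have h1 : HasDerivAt (fun t : ℝ => t * Real.exp t) (1 * Real.exp t + t * Real.exp t) t :=
    (hasDerivAt_id t).mul (Real.hasDerivAt_exp t)
  have h2 : HasDerivAt (fun t : ℝ => t * Real.exp t - Real.exp t + 1)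
      (1 * Real.exp t + t * Real.exp t - Real.exp t) t :=
    ((h1.sub (Real.hasDerivAt_exp t)).add_const 1)
  exact h2.congr_deriv (by ring)

lemma psiBLM_zero : psiBLM 0 = 0 := by simp [psiBLM]

-- r(s) = s^2/2 - psi s is antitone
lemma psiBLM_sq_half (s : ℝ) : (s ≤ 0 → psiBLM s ≤ s^2/2) ∧ (0 ≤ s → s^2/2 ≤ psiBLM s) := by
  have hr : ∀ t : ℝ, HasDerivAt (fun s : ℝ => s^2/2 - psiBLM s) (t * (1 - Real.exp t)) t := by
    intro t
    have h1 : HasDerivAt (fun s : ℝ => s^2/2 - psiBLM s) (2 * t^1 / 2 - t * Real.exp t) t := by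
      exact ((hasDerivAt_pow 2 t).div_const 2).sub (psiBLM_hasDeriv t)
    convert h1 using 1; ring
  have hanti : Antitone (fun s : ℝ => s^2/2 - psiBLM s) := by
    apply antitone_of_deriv_nonpos
    · intro t; exact (hr t).differentiableAt
    · intro t
      rw [(hr t).deriv]
      rcases le_or_gt t 0 with h | h
      · apply mul_nonpos_of_nonpos_of_nonneg h
        simp [sub_nonneg, Real.exp_le_one_iff.mpr h]
      · apply mul_nonpos_of_nonneg_of_nonpos h.le
        simp [sub_nonpos, Real.one_le_exp h.le]
  have h0 : (fun s : ℝ => s^2/2 - psiBLM s) 0 = 0 := by simp [psiBLM_zero]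
  constructor
  · intro hs
    have := hanti hs; rw [h0] at this; linarith [this]
  · intro hs
    have := hanti hs; rw [h0] at this; linarith [this]

lemma psiBLM_nonneg {s : ℝ} (hs : 0 ≤ s) : 0 ≤ psiBLM s := by
  have := (psiBLM_sq_half s).2 hs; nlinarith [sq_nonneg s]

-- q(s) = s^2 exp s - 2 psi s ≥ 0 for s ≥ 0
lemma psiBLM_q_nonneg {s : ℝ} (hs : 0 ≤ s) : 2 * psiBLM s ≤ s^2 * Real.exp s := by
  have hq : ∀ t : ℝ, HasDerivAt (fun s : ℝ => s^2 * Real.exp s - 2 * psiBLM s)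
      (t^2 * Real.exp t) t := by
    intro t
    have h1 : HasDerivAt (fun s : ℝ => s^2 * Real.exp s)
        ((2 * t^1) * Real.exp t + t^2 * Real.exp t) t :=
      (hasDerivAt_pow 2 t).mul (Real.hasDerivAt_exp t)
    have h2 := h1.sub ((psiBLM_hasDeriv t).const_mul 2)
    exact h2.congr_deriv (by ring)
  have hmono : Monotone (fun s : ℝ => s^2 * Real.exp s - 2 * psiBLM s) := by
    apply monotone_of_deriv_nonneg
    · intro t; exact (hq t).differentiableAt
    · intro t; rw [(hq t).deriv]; positivity
  have := hmono hs
  simp only [psiBLM_zero] at this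
  simp only [ne_eq, OfNat.ofNat_ne_zero, not_false_eq_true, zero_pow, zero_mul, mul_zero,
    sub_zero, zero_sub] at this
  linarith [this]

-- key: for 0 < s ≤ b : psi s * b^2 ≤ psi b * s^2  (i.e. psi s / s^2 monotone)
lemma psiBLM_ratio_mono {s b : ℝ} (hs : 0 < s) (hsb : s ≤ b) :
    psiBLM s * b^2 ≤ psiBLM b * s^2 := by
  have hmono : MonotoneOn (fun t : ℝ => psiBLM t / t^2) (Set.Ioi 0) := by
    have hder : ∀ t ∈ Set.Ioi (0:ℝ), HasDerivAt (fun t : ℝ => psiBLM t / t^2)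
        ((t^2 * Real.exp t - 2 * psiBLM t) / t^3) t := by
      intro t ht
      have ht0 : (t:ℝ) ≠ 0 := ne_of_gt ht
      have h1 : HasDerivAt (fun t : ℝ => psiBLM t / t^2)
          ((t * Real.exp t * t^2 - psiBLM t * (2 * t^1)) / (t^2)^2) t :=
        (psiBLM_hasDeriv t).div (hasDerivAt_pow 2 t) (by positivity)
      convert h1 using 1
      field_simp
    apply monotoneOn_of_deriv_nonneg (convex_Ioi 0)
    · apply ContinuousOn.div
      · exact (Continuous.continuousOn (by unfold psiBLM; continuity))
      · exact (continuous_pow 2).continuousOn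
      · intro t ht; have : (0:ℝ) < t := ht; positivity
    · intro t ht
      rw [interior_Ioi] at ht
      exact (hder t ht).differentiableAt.differentiableWithinAt
    · intro t ht
      rw [interior_Ioi] at ht
      rw [(hder t ht).deriv]
      have ht0 : (0:ℝ) < t := ht
      have hq := psiBLM_q_nonneg ht0.le
      apply div_nonneg (by linarith) (by positivity)
  have hb : (0:ℝ) < b := lt_of_lt_of_le hs hsb
  have := hmono (Set.mem_Ioi.mpr hs) (Set.mem_Ioi.mpr hb) hsb
  rw [div_le_div_iff₀ (by positivity) (by positivity)] at this
  linarith [this]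

/-- The key pointwise inequality: for `β > 0` and `t ≤ 1`, `ψ(βt) ≤ ψ(β) t²`. -/
lemma psiBLM_key {β t : ℝ} (hβ : 0 < β) (ht : t ≤ 1) :
    psiBLM (β * t) ≤ psiBLM β * t^2 := by
  rcases le_or_gt t 0 with h | h
  · have hs : β * t ≤ 0 := mul_nonpos_of_nonneg_of_nonpos hβ.le h
    have h1 := (psiBLM_sq_half (β * t)).1 hs
    have h2 := (psiBLM_sq_half β).2 hβ.le
    nlinarith [sq_nonneg t, sq_nonneg (β*t)]
  · have hs : 0 < β * t := by positivity
    have hsb : β * t ≤ β := by nlinarith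
    have := psiBLM_ratio_mono hs hsb
    have hβ2 : (0:ℝ) < β^2 := by positivity
    rw [mul_pow] at this
    nlinarith [this]

end PsiAux


noncomputable section RMargSection
open Set Function Finset

variable {δ : Type*} {X : δ → Type*} [∀ i, MeasurableSpace (X i)] [DecidableEq δ]
variable (μ : ∀ i, Measure (X i)) [∀ i, IsProbabilityMeasure (μ i)]

/-- bounded measurable functions are integrable on a finite measure -/
lemma integrable_of_bdd {α : Type*} [MeasurableSpace α] {ρ : Measure α} [IsFiniteMeasure ρ]
    {g : α → ℝ} {C : ℝ} (hg : Measurable g) (hC : ∀ z, |g z| ≤ C) : Integrable g ρ := by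
  apply Integrable.mono' (integrable_const C) hg.aestronglyMeasurable
  filter_upwards with z using (by simpa using hC z)

/-- Real-valued marginal: integrate out the variables in `s`. -/
def rmarg (s : Finset δ) (f : (∀ i, X i) → ℝ) (x : ∀ i, X i) : ℝ :=
  ∫ y : ∀ i : s, X i, f (updateFinset x s y) ∂Measure.pi fun i : s => μ i

variable {s t : Finset δ} {f : (∀ i, X i) → ℝ} {x : ∀ i, X i}

theorem Measurable.rmarg (hf : Measurable f) : Measurable (rmarg μ s f) := by
  refine (StronglyMeasurable.integral_prod_right' (f := fun p :
    ((∀ i, X i) × (∀ i : s, X i)) => f (updateFinset p.1 s p.2)) ?_).measurable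
  exact (hf.comp measurable_updateFinset').stronglyMeasurable

theorem rmarg_bounds {a b : ℝ} (hf : Measurable f) (hab : ∀ z, a ≤ f z ∧ f z ≤ b) :
    a ≤ rmarg μ s f x ∧ rmarg μ s f x ≤ b := by
  have hint : Integrable (fun y : ∀ i : s, X i => f (updateFinset x s y))
      (Measure.pi fun i : s => μ i) := by
    apply integrable_of_bdd (C := max |a| |b|)
    · exact hf.comp (measurable_updateFinset'.comp measurable_prodMk_left)
    · intro z
      rcases hab (updateFinset x s z) with ⟨h1, h2⟩
      rw [abs_le]
      have ha1 : -|a| ≤ a := neg_abs_le a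
      have ha2 := le_max_left |a| |b|
      have hb1 := le_abs_self b
      have hb2 := le_max_right |a| |b|
      constructor <;> linarith
  constructor
  · calc a = ∫ _ : ∀ i : s, X i, a ∂Measure.pi fun i : s => μ i := by simp
      _ ≤ _ := integral_mono (integrable_const a) hint (fun z => (hab _).1)
  · calc rmarg μ s f x ≤ ∫ _ : ∀ i : s, X i, b ∂Measure.pi fun i : s => μ i :=
        integral_mono hint (integrable_const b) (fun z => (hab _).2)
      _ = b := by simp

@[simp] theorem rmarg_empty (f : (∀ i, X i) → ℝ) (hf : Measurable f) : rmarg μ ∅ f = f := by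
  ext1 x
  simp_rw [rmarg, Measure.pi_of_empty fun i : (∅ : Finset δ) => μ i]
  have hsm : StronglyMeasurable fun y : ∀ i : (∅ : Finset δ), X i => f (updateFinset x ∅ y) := by
    exact (hf.comp (measurable_updateFinset'.comp measurable_prodMk_left)).stronglyMeasurable
  rw [integral_dirac' _ _ hsm]
  simp [updateFinset]

theorem rmarg_congr {x y : ∀ i, X i} (f : (∀ i, X i) → ℝ) (h : ∀ i ∉ s, x i = y i) :
    rmarg μ s f x = rmarg μ s f y := by
  dsimp [rmarg, updateFinset_def]; rcongr; exact h _ ‹_›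

theorem rmarg_update_of_mem {i : δ} (hi : i ∈ s) (f : (∀ i, X i) → ℝ) (x : ∀ i, X i) (y : X i) :
    rmarg μ s f (Function.update x i y) = rmarg μ s f x := by
  apply rmarg_congr
  intro j hj
  exact Function.update_of_ne (fun h => by subst h; exact hj hi) _ _

theorem rmarg_singleton (f : (∀ i, X i) → ℝ) (i : δ) :
    rmarg μ {i} f = fun x => ∫ xᵢ, f (Function.update x i xᵢ) ∂μ i := by
  let α : Type _ := ({i} : Finset δ)
  let e := (MeasurableEquiv.piUnique fun j : α ↦ X j).symm
  ext1 x
  have hmp := measurePreserving_piUnique (fun j : ({i} : Finset δ) ↦ μ j) |>.symm _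
  calc rmarg μ {i} f x
      = ∫ (y : X (default : α)), f (updateFinset x {i} (e y)) ∂μ (default : α) := by
        rw [rmarg, ← hmp.integral_comp']
    _ = ∫ xᵢ, f (Function.update x i xᵢ) ∂μ i := by simp [update_eq_updateFinset]; rfl

theorem rmarg_union {C : ℝ} (f : (∀ i, X i) → ℝ) (hf : Measurable f) (hC : ∀ z, |f z| ≤ C)
    (hst : Disjoint s t) : rmarg μ (s ∪ t) f = rmarg μ s (rmarg μ t f) := by
  ext1 x
  let e := MeasurableEquiv.piFinsetUnion X hst
  have hmp := measurePreserving_piFinsetUnion hst μ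
  have hint : Integrable (fun y : ((i : s) → X i) × ((j : t) → X j) =>
      f (updateFinset x (s ∪ t) (e y)))
      ((Measure.pi fun i : s ↦ μ i).prod (.pi fun j : t ↦ μ j)) := by
    apply integrable_of_bdd (C := C)
    · exact hf.comp ((measurable_updateFinset'.comp measurable_prodMk_left).comp e.measurable)
    · intro z; exact hC _
  calc rmarg μ (s ∪ t) f x
      = ∫ (y : (i : ↥(s ∪ t)) → X i), f (updateFinset x (s ∪ t) y)
          ∂.pi fun i' : ↥(s ∪ t) ↦ μ i' := rfl
    _ = ∫ (y : ((i : s) → X i) × ((j : t) → X j)), f (updateFinset x (s ∪ t) (e y))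
          ∂(Measure.pi fun i : s ↦ μ i).prod (.pi fun j : t ↦ μ j) := by
        rw [← hmp.integral_comp']
    _ = ∫ (y : (i : s) → X i), ∫ (z : (j : t) → X j), f (updateFinset x (s ∪ t) (e (y, z)))
          ∂.pi fun j : t ↦ μ j ∂.pi fun i : s ↦ μ i := integral_prod _ hint
    _ = rmarg μ s (rmarg μ t f) x := by
        simp_rw [rmarg, updateFinset_updateFinset hst]
        rfl

/-- Peel off a single integral at the beginning. -/
theorem rmarg_insert {C : ℝ} (f : (∀ i, X i) → ℝ) (hf : Measurable f) (hC : ∀ z, |f z| ≤ C)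
    {i : δ} (hi : i ∉ s) (x : ∀ i, X i) :
    rmarg μ (insert i s) f x = ∫ xᵢ, rmarg μ s f (Function.update x i xᵢ) ∂μ i := by
  rw [Finset.insert_eq, rmarg_union μ f hf hC (Finset.disjoint_singleton_left.mpr hi),
    rmarg_singleton]

/-- Peel off a single integral at the end. -/
theorem rmarg_insert' {C : ℝ} (f : (∀ i, X i) → ℝ) (hf : Measurable f) (hC : ∀ z, |f z| ≤ C)
    {i : δ} (hi : i ∉ s) :
    rmarg μ (insert i s) f = rmarg μ s (fun x => ∫ xᵢ, f (Function.update x i xᵢ) ∂μ i) := by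
  rw [Finset.insert_eq, Finset.union_comm,
    rmarg_union μ f hf hC (Finset.disjoint_singleton_right.mpr hi), rmarg_singleton]

@[simp] theorem rmarg_univ [Fintype δ] {f : (∀ i, X i) → ℝ} (x : ∀ i, X i) :
    rmarg μ Finset.univ f x = ∫ z, f z ∂Measure.pi μ := by
  let e : { j // j ∈ Finset.univ } ≃ δ := Equiv.subtypeUnivEquiv Finset.mem_univ
  have hmp := measurePreserving_piCongrLeft μ e
  rw [rmarg, ← hmp.integral_comp']
  congr 1
  ext y
  congr 1
  ext j
  simp [updateFinset_def, MeasurableEquiv.piCongrLeft, Equiv.piCongrLeft, e]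
  rfl

end RMargSection


section OneDim9
variable {α : Type*} [MeasurableSpace α] {ρ : Measure α} [IsProbabilityMeasure ρ]

lemma integrable_of_bdd9 {g : α → ℝ} {C : ℝ} (hg : Measurable g) (hC : ∀ z, |g z| ≤ C) :
    Integrable g ρ := by
  apply Integrable.mono' (integrable_const C) hg.aestronglyMeasurable
  filter_upwards with z using (by simpa using hC z)
/-- Variational bound: if `∫ G = c`, `φ, G` positive bounded, then
`∫ φ (log G - log c) ≤ ∫ φ log φ - (∫ φ) log (∫ φ)`. -/
lemma variational_bound {φ G : α → ℝ} {ε A : ℝ} (hε : 0 < ε)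
    (hφm : Measurable φ) (hGm : Measurable G)
    (hφ : ∀ z, ε ≤ φ z ∧ φ z ≤ A) (hG : ∀ z, ε ≤ G z ∧ G z ≤ A) :
    ∫ z, φ z * (Real.log (G z) - Real.log (∫ w, G w ∂ρ)) ∂ρ
      ≤ ∫ z, φ z * Real.log (φ z) ∂ρ - (∫ z, φ z ∂ρ) * Real.log (∫ z, φ z ∂ρ) := by
  have hne : Nonempty α := by
    by_contra h
    rw [not_nonempty_iff] at h
    have h1 : ρ Set.univ = 1 := measure_univ
    rw [Set.univ_eq_empty_iff.mpr h] at h1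
    simp at h1
  obtain ⟨z0⟩ := hne
  have hεA : ε ≤ A := le_trans (hφ z0).1 (hφ z0).2
  have hA : 0 < A := lt_of_lt_of_le hε hεA
  -- bounds for integrability
  have habs : ∀ (h : α → ℝ), Measurable h → (∀ z, ε ≤ h z ∧ h z ≤ A) → Integrable h ρ := by
    intro h hm hb
    exact integrable_of_bdd9 hm (fun z => abs_le.mpr ⟨by linarith [(hb z).1], (hb z).2⟩)
  have hφi : Integrable φ ρ := habs φ hφm hφ
  have hGi : Integrable G ρ := habs G hGm hG
  set c : ℝ := ∫ w, G w ∂ρ with hc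
  set I : ℝ := ∫ z, φ z ∂ρ with hI
  have hcb : ε ≤ c ∧ c ≤ A := by
    constructor
    · calc ε = ∫ _, ε ∂ρ := by simp
        _ ≤ c := integral_mono (integrable_const ε) hGi fun z => (hG z).1
    · calc c ≤ ∫ _, A ∂ρ := integral_mono hGi (integrable_const A) fun z => (hG z).2
        _ = A := by simp
  have hIb : ε ≤ I ∧ I ≤ A := by
    constructor
    · calc ε = ∫ _, ε ∂ρ := by simp
        _ ≤ I := integral_mono (integrable_const ε) hφi fun z => (hφ z).1
    · calc I ≤ ∫ _, A ∂ρ := integral_mono hφi (integrable_const A) fun z => (hφ z).2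
        _ = A := by simp
  have hc0 : 0 < c := lt_of_lt_of_le hε hcb.1
  have hI0 : 0 < I := lt_of_lt_of_le hε hIb.1
  -- pointwise inequality
  have hpt : ∀ z, φ z * (Real.log (G z) - Real.log c) -
      (φ z * Real.log (φ z) - φ z * Real.log I) ≤ G z * I / c - φ z := by
    intro z
    have hφ0 : 0 < φ z := lt_of_lt_of_le hε (hφ z).1
    have hG0 : 0 < G z := lt_of_lt_of_le hε (hG z).1
    have key : Real.log (G z * I / (c * φ z)) ≤ G z * I / (c * φ z) - 1 :=
      Real.log_le_sub_one_of_pos (by positivity)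
    have hlog : Real.log (G z * I / (c * φ z)) =
        Real.log (G z) - Real.log c - Real.log (φ z) + Real.log I := by
      rw [Real.log_div (by positivity) (by positivity), Real.log_mul (ne_of_gt hG0)
        (ne_of_gt hI0), Real.log_mul (ne_of_gt hc0) (ne_of_gt hφ0)]
      ring
    have := mul_le_mul_of_nonneg_left key hφ0.le
    rw [hlog] at this
    calc φ z * (Real.log (G z) - Real.log c) - (φ z * Real.log (φ z) - φ z * Real.log I)
        = φ z * (Real.log (G z) - Real.log c - Real.log (φ z) + Real.log I) := by ring
      _ ≤ φ z * (G z * I / (c * φ z) - 1) := this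
      _ = G z * I / c - φ z := by field_simp
  -- integrate
  have hLB : ∀ (h : α → ℝ), Measurable h → (∀ z, ε ≤ h z ∧ h z ≤ A) →
      Integrable (fun z => h z * Real.log (h z)) ρ := by
    intro h hm hb
    apply integrable_of_bdd9 (C := A * (|Real.log ε| + |Real.log A|)) (hm.mul (hm.log))
    intro z
    have h1 : 0 < h z := lt_of_lt_of_le hε (hb z).1
    simp only [Pi.mul_apply]
    rw [abs_mul]
    have hla : |Real.log (h z)| ≤ |Real.log ε| + |Real.log A| := by
      rcases abs_cases (Real.log (h z)) with ⟨he, _⟩ | ⟨he, _⟩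
      · rw [he]
        have := Real.log_le_log h1 (hb z).2
        have := le_abs_self (Real.log A)
        have := abs_nonneg (Real.log ε)
        linarith
      · rw [he]
        have := Real.log_le_log hε (hb z).1
        have := neg_abs_le (Real.log ε)
        have := abs_nonneg (Real.log A)
        linarith
    have hha : |h z| ≤ A := abs_le.mpr ⟨by linarith [(hb z).1], (hb z).2⟩
    exact mul_le_mul hha hla (abs_nonneg _) hA.le
  have hint1 : Integrable (fun z => φ z * (Real.log (G z) - Real.log c)) ρ := by
    apply integrable_of_bdd9 (C := A * (|Real.log ε| + |Real.log A| + |Real.log c|))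
    · exact hφm.mul ((hGm.log).sub measurable_const)
    · intro z
      rw [abs_mul]
      apply mul_le_mul (abs_le.mpr ⟨by linarith [(hφ z).1], (hφ z).2⟩)
      · have h1 : 0 < G z := lt_of_lt_of_le hε (hG z).1
        calc |Real.log (G z) - Real.log c| ≤ |Real.log (G z)| + |Real.log c| := abs_sub _ _
          _ ≤ |Real.log ε| + |Real.log A| + |Real.log c| := by
              have hla : |Real.log (G z)| ≤ |Real.log ε| + |Real.log A| := by
                rcases abs_cases (Real.log (G z)) with ⟨he, _⟩ | ⟨he, _⟩
                · rw [he]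
                  have := Real.log_le_log h1 (hG z).2
                  have := le_abs_self (Real.log A)
                  have := abs_nonneg (Real.log ε)
                  linarith
                · rw [he]
                  have := Real.log_le_log hε (hG z).1
                  have := neg_abs_le (Real.log ε)
                  have := abs_nonneg (Real.log A)
                  linarith
              linarith
      · exact abs_nonneg _
      · exact hA.le
  have hint2 : Integrable (fun z => φ z * Real.log (φ z) - φ z * Real.log I) ρ :=
    (hLB φ hφm hφ).sub (hφi.mul_const _)
  have hint3 : Integrable (fun z => G z * I / c - φ z) ρ :=
    ((hGi.mul_const I).div_const c).sub hφi
  have hmono := integral_mono (hint1.sub hint2) hint3 hpt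
  simp only [Pi.sub_apply] at hmono
  rw [integral_sub hint1 hint2, integral_sub ((hGi.mul_const I).div_const c) hφi,
    integral_sub (hLB φ hφm hφ) (hφi.mul_const _)] at hmono
  have e1 : ∫ z, G z * I / c ∂ρ = I := by
    rw [integral_div, integral_mul_const, ← hc]
    field_simp
  have e2 : ∫ z, φ z * Real.log I ∂ρ = I * Real.log I := by
    rw [integral_mul_const, ← hI]
  rw [e1, e2] at hmono
  linarith [hmono]


/-- One-dimensional entropy–variance bound. -/
lemma entropy_le_var {g : α → ℝ} {C β : ℝ} (hβ : 0 < β) (hg : Measurable g)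
    (hC : ∀ z, |g z| ≤ C) (hone : ∀ z, g z - ∫ w, g w ∂ρ ≤ 1) :
    ∫ z, Real.exp (β * g z) * (β * g z) ∂ρ -
        (∫ z, Real.exp (β * g z) ∂ρ) * Real.log (∫ z, Real.exp (β * g z) ∂ρ)
      ≤ psiBLM β * (∫ z, (g z - ∫ w, g w ∂ρ)^2 ∂ρ) * (∫ z, Real.exp (β * g z) ∂ρ) := by
  have hgi : Integrable g ρ := integrable_of_bdd9 hg hC
  set m : ℝ := ∫ w, g w ∂ρ with hm
  have hmC : |m| ≤ C := by
    calc |m| = ‖∫ w, g w ∂ρ‖ := (Real.norm_eq_abs _).symm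
      _ ≤ ∫ w, ‖g w‖ ∂ρ := norm_integral_le_integral_norm _
      _ ≤ ∫ _, C ∂ρ := integral_mono hgi.norm (integrable_const C) (fun z => by simpa using hC z)
      _ = C := by simp
  have hC0 : 0 ≤ C := le_trans (abs_nonneg m) hmC
  -- exp bounds
  have hexpb : ∀ z, Real.exp (-(β*C)) ≤ Real.exp (β * g z) ∧
      Real.exp (β * g z) ≤ Real.exp (β*C) := by
    intro z
    rcases abs_le.mp (hC z) with ⟨h1, h2⟩
    exact ⟨Real.exp_le_exp.mpr (by nlinarith), Real.exp_le_exp.mpr (by nlinarith)⟩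
  have hEm : Measurable fun z => Real.exp (β * g z) := (hg.const_mul β).exp
  have hEi : Integrable (fun z => Real.exp (β * g z)) ρ := by
    apply integrable_of_bdd9 hEm (C := Real.exp (β*C))
    intro z
    rw [abs_of_pos (Real.exp_pos _)]
    exact (hexpb z).2
  set Z : ℝ := ∫ z, Real.exp (β * g z) ∂ρ with hZ
  have hZlb : Real.exp (-(β*C)) ≤ Z := by
    calc Real.exp (-(β*C)) = ∫ _, Real.exp (-(β*C)) ∂ρ := by simp
      _ ≤ Z := integral_mono (integrable_const _) hEi fun z => (hexpb z).1
  have hZ0 : 0 < Z := lt_of_lt_of_le (Real.exp_pos _) hZlb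
  -- step 1 : exp (β m) ≤ Z
  have hstep1 : Real.exp (β * m) ≤ Z := by
    have hpt : ∀ z, Real.exp (β*m) * (1 + (β * g z - β * m)) ≤ Real.exp (β * g z) := by
      intro z
      have := Real.add_one_le_exp (β * g z - β * m)
      calc Real.exp (β*m) * (1 + (β * g z - β * m))
          ≤ Real.exp (β*m) * Real.exp (β * g z - β * m) := by
            apply mul_le_mul_of_nonneg_left (by linarith) (Real.exp_pos _).le
        _ = Real.exp (β * g z) := by rw [← Real.exp_add]; ring_nf
    have hli : Integrable (fun z => Real.exp (β*m) * (1 + (β * g z - β * m))) ρ := by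
      have he : (fun z => Real.exp (β*m) * (1 + (β * g z - β * m)))
          = fun z => (Real.exp (β*m) * (1 - β*m)) + (Real.exp (β*m) * β) * g z := by
        funext z; ring
      rw [he]
      exact (integrable_const _).add (hgi.const_mul _)
    have := integral_mono hli hEi hpt
    calc Real.exp (β * m) = ∫ z, Real.exp (β*m) * (1 + (β * g z - β * m)) ∂ρ := by
          rw [integral_const_mul]
          have h9 : (fun z => 1 + (β * g z - β * m)) = fun z => (1 - β*m) + β * g z := by
            funext z; ring
          have : ∫ z, (1 + (β * g z - β * m)) ∂ρ = 1 := by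
            rw [h9, integral_add (integrable_const _) (hgi.const_mul β), integral_const_mul, integral_const]
            simp [← hm]
          rw [this, mul_one]
      _ ≤ Z := this
  -- step 2 : Z * log Z ≥ Z * (β m) + Z - exp (β m)
  have hstep2 : Z * (β * m) + Z - Real.exp (β * m) ≤ Z * Real.log Z := by
    have hb : (0:ℝ) < Real.exp (β*m) := Real.exp_pos _
    have hx : Real.log (Real.exp (β*m) / Z) ≤ Real.exp (β*m) / Z - 1 :=
      Real.log_le_sub_one_of_pos (by positivity)
    rw [Real.log_div (ne_of_gt hb) (ne_of_gt hZ0), Real.log_exp] at hx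
    have := mul_le_mul_of_nonneg_left hx hZ0.le
    have he : Z * (Real.exp (β*m) / Z - 1) = Real.exp (β*m) - Z := by field_simp
    nlinarith [this]
  -- step 3+4
  have hVnn : 0 ≤ ∫ z, (g z - m)^2 ∂ρ := integral_nonneg fun z => sq_nonneg _
  have hψ : 0 ≤ psiBLM β := psiBLM_nonneg hβ.le
  -- pointwise: β(g-m)e^{βg} - e^{βg} + e^{βm} ≤ e^{βm} ψβ (g-m)²
  have hkey : ∀ z, β * (g z - m) * Real.exp (β * g z) - Real.exp (β * g z) + Real.exp (β * m)
      ≤ Real.exp (β * m) * (psiBLM β * (g z - m)^2) := by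
    intro z
    have heq : β * (g z - m) * Real.exp (β * g z) - Real.exp (β * g z) + Real.exp (β * m)
        = Real.exp (β * m) * psiBLM (β * (g z - m)) := by
      unfold psiBLM
      have : Real.exp (β * g z) = Real.exp (β * m) * Real.exp (β * (g z - m)) := by
        rw [← Real.exp_add]; ring_nf
      rw [this]; ring
    rw [heq]
    exact mul_le_mul_of_nonneg_left (psiBLM_key hβ (hone z)) (Real.exp_pos _).le
  -- integrate hkey
  have hlhsI : Integrable (fun z => β * (g z - m) * Real.exp (β * g z) - Real.exp (β * g z)
      + Real.exp (β * m)) ρ := by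
    apply integrable_of_bdd9 (C := (β * (2*C)) * Real.exp (β*C) + Real.exp (β*C) + Real.exp (β*C))
    · exact ((((hg.sub measurable_const).const_mul β).mul hEm).sub hEm).add measurable_const
    · intro z
      have h1 : |β * (g z - m) * Real.exp (β * g z)| ≤ β * (2*C) * Real.exp (β*C) := by
        rw [abs_mul, abs_mul, abs_of_pos hβ, abs_of_pos (Real.exp_pos _)]
        apply mul_le_mul
        · apply mul_le_mul_of_nonneg_left _ hβ.le
          calc |g z - m| ≤ |g z| + |m| := abs_sub _ _
            _ ≤ 2*C := by linarith [hC z]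
        · exact (hexpb z).2
        · exact (Real.exp_pos _).le
        · positivity
      have h2 : |Real.exp (β * g z)| ≤ Real.exp (β*C) := by
        rw [abs_of_pos (Real.exp_pos _)]; exact (hexpb z).2
      have h3 : |Real.exp (β * m)| ≤ Real.exp (β*C) := by
        rw [abs_of_pos (Real.exp_pos _)]
        exact Real.exp_le_exp.mpr (by nlinarith [abs_le.mp hmC])
      calc |β * (g z - m) * Real.exp (β * g z) - Real.exp (β * g z) + Real.exp (β * m)|
          ≤ |β * (g z - m) * Real.exp (β * g z)| + |Real.exp (β * g z)| + |Real.exp (β * m)| := by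
            apply (abs_add_le _ _).trans
            apply add_le_add_left (abs_sub _ _)
        _ ≤ _ := by linarith
  have hsqI : Integrable (fun z => (g z - m)^2) ρ := by
    apply integrable_of_bdd9 (C := (2*C)^2) ((hg.sub measurable_const).pow_const 2)
    intro z
    rw [abs_of_nonneg (sq_nonneg _)]
    have h1 := abs_le.mp (hC z)
    have h2 := abs_le.mp hmC
    simp only [Pi.sub_apply, ← hm]
    exact sq_le_sq' (by linarith) (by linarith)
  have hrhsI : Integrable (fun z => Real.exp (β * m) * (psiBLM β * (g z - m)^2)) ρ :=
    (hsqI.const_mul _).const_mul _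
  have hint := integral_mono hlhsI hrhsI hkey
  -- compute both sides
  have hL : ∫ z, (β * (g z - m) * Real.exp (β * g z) - Real.exp (β * g z) + Real.exp (β * m)) ∂ρ
      = ∫ z, Real.exp (β * g z) * (β * g z) ∂ρ - Z * (β * m) - Z + Real.exp (β * m) := by
    have hgE : Integrable (fun z => Real.exp (β * g z) * (β * g z)) ρ := by
      apply integrable_of_bdd9 (C := Real.exp (β*C) * (β * C)) (hEm.mul (hg.const_mul β))
      intro z
      simp only [Pi.mul_apply]
      rw [abs_mul, abs_of_pos (Real.exp_pos _), abs_mul, abs_of_pos hβ]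
      apply mul_le_mul (hexpb z).2 (mul_le_mul_of_nonneg_left (hC z) hβ.le) (by positivity)
        (Real.exp_pos _).le
    have e1 : ∀ z, β * (g z - m) * Real.exp (β * g z) - Real.exp (β * g z) + Real.exp (β * m)
        = (Real.exp (β * g z) * (β * g z) - (β * m) * Real.exp (β * g z))
          - Real.exp (β * g z) + Real.exp (β * m) := by intro z; ring
    have i0 : Integrable (fun z => β * m * Real.exp (β * g z)) ρ := by
      exact hEi.const_mul _
    have i1 : Integrable (fun z => Real.exp (β * g z) * (β * g z)
        - β * m * Real.exp (β * g z)) ρ := by exact hgE.sub i0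
    have i2 : Integrable (fun z => Real.exp (β * g z) * (β * g z)
        - β * m * Real.exp (β * g z) - Real.exp (β * g z)) ρ := by exact i1.sub hEi
    simp_rw [e1]
    rw [integral_add i2 (integrable_const _), integral_sub i1 hEi, integral_sub hgE i0,
      integral_const_mul, integral_const]
    simp [← hZ]
    ring
  have hR : ∫ z, Real.exp (β * m) * (psiBLM β * (g z - m)^2) ∂ρ
      = Real.exp (β * m) * (psiBLM β * ∫ z, (g z - m)^2 ∂ρ) := by
    rw [integral_const_mul, integral_const_mul]
  rw [hL, hR] at hint
  have hfin : Real.exp (β * m) * (psiBLM β * ∫ z, (g z - m)^2 ∂ρ)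
      ≤ Z * (psiBLM β * ∫ z, (g z - m)^2 ∂ρ) :=
    mul_le_mul_of_nonneg_right hstep1 (by positivity)
  nlinarith [hint, hstep2, hfin]


end OneDim9

section Helpers
variable {n : ℕ} {Ω : Fin n → Type*} [∀ k, MeasurableSpace (Ω k)]
variable (μ : ∀ k, Measure (Ω k)) [∀ k, IsProbabilityMeasure (μ k)]

lemma condExpK_measurable (k : Fin n) {g : (∀ i, Ω i) → ℝ} (hg : Measurable g) :
    Measurable (condExpK μ k g) := by
  exact (StronglyMeasurable.integral_prod_right'
    (f := fun p : ((∀ i, Ω i) × Ω k) => g (Function.update p.1 k p.2))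
    ((hg.comp measurable_update').stronglyMeasurable)).measurable

lemma integrable_slice (k : Fin n) (x : ∀ i, Ω i) {g : (∀ i, Ω i) → ℝ} {Cg : ℝ}
    (hg : Measurable g) (hCg : ∀ z, |g z| ≤ Cg) :
    Integrable (fun y => g (Function.update x k y)) (μ k) :=
  integrable_of_bdd (hg.comp (measurable_update x)) (fun y => hCg _)

lemma condExpK_abs_le (k : Fin n) {g : (∀ i, Ω i) → ℝ} {Cg : ℝ}
    (hg : Measurable g) (hCg : ∀ z, |g z| ≤ Cg) (x : ∀ i, Ω i) :
    |condExpK μ k g x| ≤ Cg := by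
  rw [condExpK]
  calc |∫ y, g (Function.update x k y) ∂μ k| = ‖∫ y, g (Function.update x k y) ∂μ k‖ :=
        (Real.norm_eq_abs _).symm
    _ ≤ ∫ y, ‖g (Function.update x k y)‖ ∂μ k := norm_integral_le_integral_norm _
    _ ≤ ∫ _, Cg ∂μ k := integral_mono (integrable_slice μ k x hg hCg).norm
        (integrable_const Cg) (fun y => by simpa using hCg _)
    _ = Cg := by simp

lemma condExpK_bounds (k : Fin n) {g : (∀ i, Ω i) → ℝ} {a b : ℝ}
    (hg : Measurable g) (hab : ∀ z, a ≤ g z ∧ g z ≤ b) (x : ∀ i, Ω i) :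
    a ≤ condExpK μ k g x ∧ condExpK μ k g x ≤ b := by
  have hi : Integrable (fun y => g (Function.update x k y)) (μ k) := by
    apply integrable_slice μ k x hg (Cg := max |a| |b|)
    intro z
    rw [abs_le]
    have := neg_abs_le a; have := le_max_left |a| |b|
    have := le_abs_self b; have := le_max_right |a| |b|
    have := hab z
    constructor <;> linarith [(hab z).1, (hab z).2]
  constructor
  · calc a = ∫ _, a ∂μ k := by simp
      _ ≤ _ := integral_mono (integrable_const a) hi (fun y => (hab _).1)
  · calc condExpK μ k g x ≤ ∫ _, b ∂μ k :=
        integral_mono hi (integrable_const b) (fun y => (hab _).2)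
      _ = b := by simp

lemma condExpK_update (k : Fin n) (g : (∀ i, Ω i) → ℝ) (x : ∀ i, Ω i) (y : Ω k) :
    condExpK μ k g (Function.update x k y) = condExpK μ k g x := by
  simp [condExpK, Function.update_idem]

lemma condVarK_update (k : Fin n) (g : (∀ i, Ω i) → ℝ) (x : ∀ i, Ω i) (y : Ω k) :
    condVarK μ k g (Function.update x k y) = condVarK μ k g x := by
  simp [condVarK, Function.update_idem, condExpK_update]

lemma condVarK_measurable (k : Fin n) {g : (∀ i, Ω i) → ℝ} (hg : Measurable g) :
    Measurable (condVarK μ k g) := by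
  exact (StronglyMeasurable.integral_prod_right'
    (f := fun p : ((∀ i, Ω i) × Ω k) => (g (Function.update p.1 k p.2) - condExpK μ k g p.1)^2)
    ((((hg.comp measurable_update').sub
      ((condExpK_measurable μ k hg).comp measurable_fst)).pow_const 2).stronglyMeasurable)).measurable

lemma condVarK_bounds (k : Fin n) {g : (∀ i, Ω i) → ℝ} {Cg : ℝ}
    (hg : Measurable g) (hCg : ∀ z, |g z| ≤ Cg) (x : ∀ i, Ω i) :
    0 ≤ condVarK μ k g x ∧ condVarK μ k g x ≤ (2*Cg)^2 := by
  have hm : |condExpK μ k g x| ≤ Cg := condExpK_abs_le μ k hg hCg x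
  constructor
  · exact integral_nonneg fun y => sq_nonneg _
  · rw [condVarK]
    calc ∫ y, (g (Function.update x k y) - condExpK μ k g x) ^ 2 ∂μ k
        ≤ ∫ _, (2*Cg)^2 ∂μ k := by
          apply integral_mono _ (integrable_const _)
          · intro y
            have h1 := abs_le.mp (hCg (Function.update x k y))
            have h2 := abs_le.mp hm
            exact sq_le_sq' (by linarith) (by linarith)
          · apply integrable_of_bdd (C := (2*Cg)^2)
            · exact ((hg.comp (measurable_update x)).sub measurable_const).pow_const 2
            · intro y
              rw [abs_of_nonneg (sq_nonneg _)]
              have h1 := abs_le.mp (hCg (Function.update x k y))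
              have h2 := abs_le.mp hm
              exact sq_le_sq' (by linarith) (by linarith)
      _ = (2*Cg)^2 := by simp

lemma nonempty_pi (_h : ∀ k, IsProbabilityMeasure (μ k)) : Nonempty (∀ i, Ω i) := by
  have h : ∀ i, Nonempty (Ω i) := by
    intro i
    by_contra h
    rw [not_nonempty_iff] at h
    have h1 : (μ i) Set.univ = 1 := measure_univ
    rw [Set.univ_eq_empty_iff.mpr h] at h1
    simp at h1
  exact ⟨fun i => Classical.choice (h i)⟩


lemma integral_condExpK (k : Fin n) {g : (∀ i, Ω i) → ℝ} {Cg : ℝ}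
    (hg : Measurable g) (hCg : ∀ z, |g z| ≤ Cg) :
    ∫ x, condExpK μ k g x ∂Measure.pi μ = ∫ x, g x ∂Measure.pi μ := by
  obtain ⟨x₀⟩ := nonempty_pi μ inferInstance
  have hu : (Finset.univ : Finset (Fin n)) = insert k (Finset.univ.erase k) :=
    (Finset.insert_erase (Finset.mem_univ k)).symm
  have hknot : k ∉ Finset.univ.erase k := Finset.notMem_erase k _
  have hEm : Measurable (condExpK μ k g) := condExpK_measurable μ k hg
  have hEC : ∀ z, |condExpK μ k g z| ≤ Cg := condExpK_abs_le μ k hg hCg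
  have h2 : rmarg μ (insert k (Finset.univ.erase k)) g
      = rmarg μ (Finset.univ.erase k) (condExpK μ k g) := by
    rw [rmarg_insert' μ g hg hCg hknot]
    rfl
  have h3 : rmarg μ (insert k (Finset.univ.erase k)) (condExpK μ k g)
      = rmarg μ (Finset.univ.erase k) (condExpK μ k g) := by
    rw [rmarg_insert' μ (condExpK μ k g) hEm hEC hknot]
    congr 1
    funext x
    simp [condExpK_update]
  rw [← rmarg_univ μ x₀ (f := g), ← rmarg_univ μ x₀ (f := condExpK μ k g)]
  conv_lhs => rw [hu]
  conv_rhs => rw [hu]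
  rw [h3, h2]

end Helpers

section Statements

variable {n : ℕ} {Ω : Fin n → Type*} [∀ k, MeasurableSpace (Ω k)]

theorem stmt_11 (μ : ∀ k, Measure (Ω k)) [∀ k, IsProbabilityMeasure (μ k)]
    (f : (∀ i, Ω i) → ℝ) (hf : Measurable f) (C : ℝ) (hC : ∀ x, |f x| ≤ C)
    (h1 : ∀ k x, f x - condExpK μ k f x ≤ 1) (β : ℝ) (hβ : 0 < β) :
    canEntropy (Measure.pi μ) f β
      ≤ (β * Real.exp β - Real.exp β + 1) *
          thermalExp (Measure.pi μ) β f (fun x => ∑ k, condVarK μ k f x) := by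
  classical
  obtain ⟨x₀⟩ := nonempty_pi μ inferInstance
  set ν := Measure.pi μ with hν
  have hC0 : 0 ≤ C := le_trans (abs_nonneg _) (hC x₀)
  set F : (∀ i, Ω i) → ℝ := fun x => Real.exp (β * f x) with hFdef
  set ε : ℝ := Real.exp (-(β*C)) with hεdef
  set A : ℝ := Real.exp (β*C) with hAdef
  have hε0 : 0 < ε := Real.exp_pos _
  have hFm : Measurable F := (hf.const_mul β).exp
  have hFb : ∀ x, ε ≤ F x ∧ F x ≤ A := by
    intro x
    rcases abs_le.mp (hC x) with ⟨ha, hb⟩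
    exact ⟨Real.exp_le_exp.mpr (by nlinarith), Real.exp_le_exp.mpr (by nlinarith)⟩
  have hFabs : ∀ x, |F x| ≤ A := fun x => by
    rw [abs_of_pos (Real.exp_pos _)]; exact (hFb x).2
  have hψ0 : 0 ≤ psiBLM β := psiBLM_nonneg hβ.le
  set Z : ℝ := ∫ x, F x ∂ν with hZdef
  have hFi : Integrable F ν := integrable_of_bdd hFm hFabs
  have hZb : ε ≤ Z ∧ Z ≤ A := by
    constructor
    · calc ε = ∫ _, ε ∂ν := by simp
        _ ≤ Z := integral_mono (integrable_const ε) hFi fun x => (hFb x).1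
    · calc Z ≤ ∫ _, A ∂ν := integral_mono hFi (integrable_const A) fun x => (hFb x).2
        _ = A := by simp
  have hZ0 : 0 < Z := lt_of_lt_of_le hε0 hZb.1
  -- log bounds for anything in [ε, A]
  have hlogb : ∀ t : ℝ, ε ≤ t → t ≤ A → |Real.log t| ≤ β*C := by
    intro t h1t h2t
    rw [abs_le]
    constructor
    · calc -(β*C) = Real.log ε := (Real.log_exp _).symm
        _ ≤ Real.log t := Real.log_le_log hε0 h1t
    · calc Real.log t ≤ Real.log A := Real.log_le_log (lt_of_lt_of_le hε0 h1t) h2t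
        _ = β*C := Real.log_exp _
  -- the coordinate filtration
  set s : ℕ → Finset (Fin n) := fun j => Finset.univ.filter (fun i => i.val < j) with hsdef
  set T : ℕ → (∀ i, Ω i) → ℝ := fun j => rmarg μ (s j) F with hTdef
  have hTm : ∀ j, Measurable (T j) := fun j => Measurable.rmarg μ hFm
  have hTb : ∀ j x, ε ≤ T j x ∧ T j x ≤ A := fun j x => rmarg_bounds μ hFm hFb
  have hs0 : s 0 = ∅ := by
    rw [hsdef]; ext i; simp
  have hsn : s n = Finset.univ := by
    rw [hsdef]; ext i; simp [i.isLt]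
  have hT0 : T 0 = F := by rw [hTdef]; simp only [hs0]; exact rmarg_empty μ F hFm
  have hTn : ∀ x, T n x = Z := by
    intro x; rw [hTdef]; simp only [hsn]; rw [rmarg_univ μ x, hZdef, hν]
  -- entropy telescoping
  set L : ℕ → ℝ := fun j => ∫ x, F x * Real.log (T j x) ∂ν with hLdef
  have hFlogTi : ∀ j, Integrable (fun x => F x * Real.log (T j x)) ν := by
    intro j
    apply integrable_of_bdd (C := A * (β*C)) (hFm.mul (hTm j).log)
    intro x
    simp only [Pi.mul_apply]
    rw [abs_mul]
    exact mul_le_mul (hFabs x) (hlogb _ (hTb j x).1 (hTb j x).2) (abs_nonneg _)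
      (Real.exp_pos _).le
  have hL0 : L 0 = ∫ x, F x * Real.log (F x) ∂ν := by rw [hLdef]; simp only [hT0]
  have hLn : L n = Z * Real.log Z := by
    rw [hLdef]
    simp only [hTn]
    rw [integral_mul_const, ← hZdef]
  have htel : ∫ x, F x * Real.log (F x) ∂ν - Z * Real.log Z
      = ∑ j ∈ Finset.range n, (L j - L (j+1)) := by
    rw [Finset.sum_range_sub' L n, hL0, hLn]
  -- the per-coordinate entropy bound
  have hterm : ∀ j (hj : j < n),
      L j - L (j+1) ≤ psiBLM β * ∫ x, condVarK μ ⟨j, hj⟩ f x * F x ∂ν := by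
    intro j hj
    set k : Fin n := ⟨j, hj⟩ with hkdef
    have hknot : k ∉ s j := by rw [hsdef]; simp [hkdef]
    have hins : s (j+1) = insert k (s j) := by
      rw [hsdef]; ext i; simp [hkdef, Finset.mem_insert, Fin.ext_iff]; omega
    have hkin : k ∈ s (j+1) := by rw [hins]; exact Finset.mem_insert_self _ _
    -- the function whose conditional expectation we bound
    set g₀ : (∀ i, Ω i) → ℝ := fun z => F z * (Real.log (T j z) - Real.log (T (j+1) z))
      with hg₀def
    have hg₀m : Measurable g₀ := hFm.mul (((hTm j).log).sub ((hTm (j+1)).log))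
    have hg₀b : ∀ z, |g₀ z| ≤ A * (β*C + β*C) := by
      intro z
      rw [hg₀def]
      simp only
      rw [abs_mul]
      apply mul_le_mul (hFabs z) _ (abs_nonneg _) (Real.exp_pos _).le
      calc |Real.log (T j z) - Real.log (T (j+1) z)|
          ≤ |Real.log (T j z)| + |Real.log (T (j+1) z)| := abs_sub _ _
        _ ≤ β*C + β*C := add_le_add (hlogb _ (hTb j z).1 (hTb j z).2)
            (hlogb _ (hTb (j+1) z).1 (hTb (j+1) z).2)
    -- step (i): L j - L (j+1) = ∫ g₀
    have hstep1 : L j - L (j+1) = ∫ x, g₀ x ∂ν := by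
      rw [hLdef]
      simp only
      rw [← integral_sub (hFlogTi j) (hFlogTi (j+1))]
      apply integral_congr_ae
      filter_upwards with x
      rw [hg₀def]
      ring
    -- step (ii): ∫ g₀ = ∫ E_k g₀
    have hstep2 : ∫ x, g₀ x ∂ν = ∫ x, condExpK μ k g₀ x ∂ν :=
      (integral_condExpK μ k hg₀m hg₀b).symm
    -- step (iii)+(iv): pointwise bound on E_k g₀
    have hstep3 : ∀ x, condExpK μ k g₀ x
        ≤ psiBLM β * (condVarK μ k f x * condExpK μ k F x) := by
      intro x
      have hGm : Measurable (fun y => T j (Function.update x k y)) :=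
        (hTm j).comp (measurable_update x)
      have hφm : Measurable (fun y => F (Function.update x k y)) :=
        hFm.comp (measurable_update x)
      have hGb : ∀ y, ε ≤ T j (Function.update x k y) ∧ T j (Function.update x k y) ≤ A :=
        fun y => hTb j _
      have hφb : ∀ y, ε ≤ F (Function.update x k y) ∧ F (Function.update x k y) ≤ A :=
        fun y => hFb _
      -- identify T (j+1)
      have hTins : T (j+1) x = ∫ y, T j (Function.update x k y) ∂μ k := by
        rw [hTdef]
        simp only [hins]
        exact rmarg_insert μ F hFm hFabs hknot x
      have hTconst : ∀ y, T (j+1) (Function.update x k y) = T (j+1) x := by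
        intro y
        rw [hTdef]
        simp only
        exact rmarg_update_of_mem μ hkin F x y
      have hvb := variational_bound (ρ := μ k) hε0 hφm hGm hφb hGb
      -- rewrite LHS of hvb
      have hlhs : condExpK μ k g₀ x = ∫ y, F (Function.update x k y) *
          (Real.log (T j (Function.update x k y)) -
            Real.log (∫ w, T j (Function.update x k w) ∂μ k)) ∂μ k := by
        rw [condExpK]
        apply integral_congr_ae
        filter_upwards with y
        rw [hg₀def]
        simp only
        rw [hTconst y, hTins]
      -- one-dimensional entropy bound
      have hone : ∀ y, f (Function.update x k y)
          - ∫ w, f (Function.update x k w) ∂μ k ≤ 1 := by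
        intro y
        have := h1 k (Function.update x k y)
        rwa [condExpK_update μ k f x y] at this
      have hev := entropy_le_var (ρ := μ k) (C := C) hβ (hf.comp (measurable_update x))
        (fun y => hC _) hone
      -- match terms
      have he1 : ∫ y, F (Function.update x k y) * Real.log (F (Function.update x k y)) ∂μ k
          = ∫ y, Real.exp (β * f (Function.update x k y)) *
              (β * f (Function.update x k y)) ∂μ k := by
        apply integral_congr_ae
        filter_upwards with y
        rw [hFdef]
        simp only
        rw [Real.log_exp]
      have he2 : (∫ y, F (Function.update x k y) ∂μ k)
          = ∫ y, Real.exp (β * f (Function.update x k y)) ∂μ k := by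
        apply integral_congr_ae
        filter_upwards with y
        rw [hFdef]
      have he3 : condVarK μ k f x
          = ∫ y, (f (Function.update x k y) - ∫ w, f (Function.update x k w) ∂μ k)^2 ∂μ k := by
        rw [condVarK, condExpK]
      have he4 : condExpK μ k F x = ∫ y, F (Function.update x k y) ∂μ k := by rw [condExpK]
      rw [hlhs]
      calc ∫ y, F (Function.update x k y) *
          (Real.log (T j (Function.update x k y)) -
            Real.log (∫ w, T j (Function.update x k w) ∂μ k)) ∂μ k
          ≤ ∫ y, F (Function.update x k y) * Real.log (F (Function.update x k y)) ∂μ k -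
            (∫ y, F (Function.update x k y) ∂μ k) *
              Real.log (∫ y, F (Function.update x k y) ∂μ k) := hvb
        _ ≤ psiBLM β * (condVarK μ k f x * condExpK μ k F x) := by
            rw [he1, he2, he3, he4, he2]
            calc ∫ y, Real.exp (β * f (Function.update x k y)) *
                  (β * f (Function.update x k y)) ∂μ k -
                (∫ y, Real.exp (β * f (Function.update x k y)) ∂μ k) *
                  Real.log (∫ y, Real.exp (β * f (Function.update x k y)) ∂μ k)
                ≤ psiBLM β * (∫ y, (f (Function.update x k y)
                      - ∫ w, f (Function.update x k w) ∂μ k)^2 ∂μ k) *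
                    (∫ y, Real.exp (β * f (Function.update x k y)) ∂μ k) := hev
              _ = _ := by ring
    -- step (v): integrate
    have hEg₀m : Measurable (condExpK μ k g₀) := condExpK_measurable μ k hg₀m
    have hEg₀b : ∀ z, |condExpK μ k g₀ z| ≤ A * (β*C + β*C) :=
      condExpK_abs_le μ k hg₀m hg₀b
    have hVm : Measurable (condVarK μ k f) := condVarK_measurable μ k hf
    have hVb : ∀ x, 0 ≤ condVarK μ k f x ∧ condVarK μ k f x ≤ (2*C)^2 :=
      condVarK_bounds μ k hf hC
    have hEFm : Measurable (condExpK μ k F) := condExpK_measurable μ k hFm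
    have hEFb : ∀ x, ε ≤ condExpK μ k F x ∧ condExpK μ k F x ≤ A :=
      condExpK_bounds μ k hFm hFb
    have hstep5 : ∫ x, condExpK μ k g₀ x ∂ν
        ≤ ∫ x, psiBLM β * (condVarK μ k f x * condExpK μ k F x) ∂ν := by
      apply integral_mono (integrable_of_bdd hEg₀m hEg₀b) _ hstep3
      apply integrable_of_bdd (C := psiBLM β * ((2*C)^2 * A))
        (((hVm.mul hEFm)).const_mul _)
      intro x
      simp only [Pi.mul_apply]
      rw [abs_mul, abs_mul, abs_of_nonneg hψ0]
      apply mul_le_mul_of_nonneg_left _ hψ0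
      apply mul_le_mul (abs_le.mpr ⟨by linarith [(hVb x).1, sq_nonneg (2*C)], (hVb x).2⟩)
        (abs_le.mpr ⟨by linarith [(hEFb x).1, hε0], (hEFb x).2⟩) (abs_nonneg _)
        (sq_nonneg _)
    -- step (vi): ∫ condVar * E_k F = ∫ condVar * F
    have hstep6 : ∫ x, condVarK μ k f x * condExpK μ k F x ∂ν
        = ∫ x, condVarK μ k f x * F x ∂ν := by
      have hVFm : Measurable (fun z => condVarK μ k f z * F z) := hVm.mul hFm
      have hVFb : ∀ z, |condVarK μ k f z * F z| ≤ (2*C)^2 * A := by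
        intro z
        rw [abs_mul]
        apply mul_le_mul (abs_le.mpr ⟨by linarith [(hVb z).1, sq_nonneg (2*C)], (hVb z).2⟩)
          (hFabs z) (abs_nonneg _) (sq_nonneg _)
      have hpt : ∀ x, condVarK μ k f x * condExpK μ k F x
          = condExpK μ k (fun z => condVarK μ k f z * F z) x := by
        intro x
        rw [condExpK, condExpK]
        rw [← integral_const_mul]
        apply integral_congr_ae
        filter_upwards with y
        rw [condVarK_update μ k f x y]
      calc ∫ x, condVarK μ k f x * condExpK μ k F x ∂ν
          = ∫ x, condExpK μ k (fun z => condVarK μ k f z * F z) x ∂ν := by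
            apply integral_congr_ae; filter_upwards with x; rw [hpt x]
        _ = ∫ x, condVarK μ k f x * F x ∂ν := integral_condExpK μ k hVFm hVFb
    rw [hstep1, hstep2]
    calc ∫ x, condExpK μ k g₀ x ∂ν
        ≤ ∫ x, psiBLM β * (condVarK μ k f x * condExpK μ k F x) ∂ν := hstep5
      _ = psiBLM β * ∫ x, condVarK μ k f x * condExpK μ k F x ∂ν := integral_const_mul _ _
      _ = psiBLM β * ∫ x, condVarK μ k f x * F x ∂ν := by rw [hstep6]
  -- sum over coordinates
  set W' : ℕ → ℝ := fun j => if h : j < n then ∫ x, condVarK μ (⟨j, h⟩ : Fin n) f x * F x ∂ν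
    else 0 with hW'def
  have hsum : ∑ j ∈ Finset.range n, (L j - L (j+1))
      ≤ psiBLM β * ∑ k : Fin n, ∫ x, condVarK μ k f x * F x ∂ν := by
    have h1' : ∑ j ∈ Finset.range n, (L j - L (j+1))
        ≤ ∑ j ∈ Finset.range n, psiBLM β * W' j := by
      apply Finset.sum_le_sum
      intro j hjm
      have hj := Finset.mem_range.mp hjm
      rw [hW'def]
      simp only
      rw [dif_pos hj]
      exact hterm j hj
    refine h1'.trans (le_of_eq ?_)
    rw [← Finset.mul_sum]
    congr 1
    rw [← Fin.sum_univ_eq_sum_range W' n]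
    apply Finset.sum_congr rfl
    intro k _
    rw [hW'def]
    simp only
    rw [dif_pos k.isLt]
  -- combine with sum-of-variances
  have hVsum : ∑ k : Fin n, ∫ x, condVarK μ k f x * F x ∂ν
      = ∫ x, (∑ k : Fin n, condVarK μ k f x) * F x ∂ν := by
    rw [← integral_finset_sum]
    · apply integral_congr_ae
      filter_upwards with x
      rw [Finset.sum_mul]
    · intro k _
      apply integrable_of_bdd (C := (2*C)^2 * A) ((condVarK_measurable μ k hf).mul hFm)
      intro z
      have hVb := condVarK_bounds μ k hf hC z
      simp only [Pi.mul_apply]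
      rw [abs_mul]
      apply mul_le_mul (abs_le.mpr ⟨by linarith [hVb.1, sq_nonneg (2*C)], hVb.2⟩)
        (hFabs z) (abs_nonneg _) (sq_nonneg _)
  have hmain : ∫ x, F x * Real.log (F x) ∂ν - Z * Real.log Z
      ≤ psiBLM β * ∫ x, (∑ k : Fin n, condVarK μ k f x) * F x ∂ν := by
    rw [htel, ← hVsum]
    exact hsum
  -- final algebra
  have hFlogF : ∫ x, F x * Real.log (F x) ∂ν = β * ∫ x, f x * Real.exp (β * f x) ∂ν := by
    rw [← integral_const_mul]
    apply integral_congr_ae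
    filter_upwards with x
    rw [hFdef]
    simp only
    rw [Real.log_exp]
    ring
  have hZeq : ∫ x, Real.exp (β * f x) ∂ν = Z := by rw [hZdef]
  have hVeq : ∫ x, (∑ k : Fin n, condVarK μ k f x) * Real.exp (β * f x) ∂ν
      = ∫ x, (∑ k : Fin n, condVarK μ k f x) * F x ∂ν := by rw [hFdef]
  rw [canEntropy, thermalExp, thermalExp]
  rw [hZeq, hVeq]
  have hψeq : β * Real.exp β - Real.exp β + 1 = psiBLM β := rfl
  rw [hψeq]
  rw [hFlogF] at hmain
  set I : ℝ := ∫ x, f x * Real.exp (β * f x) ∂ν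
  set V : ℝ := ∫ x, (∑ k : Fin n, condVarK μ k f x) * F x ∂ν
  have hfinal : (β * I - Z * Real.log Z) / Z ≤ psiBLM β * V / Z :=
    div_le_div_of_nonneg_right hmain hZ0.le
  have e1 : β * (I / Z) - Real.log Z = (β * I - Z * Real.log Z) / Z := by
    field_simp
  have e2 : psiBLM β * (V / Z) = psiBLM β * V / Z := by ring
  rw [e1, e2]
  exact hfinal


end Statements
end

section
/- For every k ∈ {1,…,n} and every x ∈ Ω, the function β ↦ E_{k,βf}[ (f − inf_k f)² ](x) is non-decreasing on ℝ. -/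
open MeasureTheory Real

section Statements

variable {n : ℕ} {Ω : Fin n → Type*} [∀ k, MeasurableSpace (Ω k)]

section KeyLemma

lemma aux_integrable {α : Type*} [MeasurableSpace α] (ν : Measure α)
    [IsProbabilityMeasure ν] {G : α → ℝ} (hG : Measurable G) (B : ℝ)
    (hB : ∀ y, |G y| ≤ B) : Integrable G ν :=
  Integrable.mono' (integrable_const B) hG.aestronglyMeasurable
    (Filter.Eventually.of_forall fun y => (hB y))

lemma key_mono {α : Type*} [MeasurableSpace α] (ν : Measure α) [IsProbabilityMeasure ν]
    (F : α → ℝ) (hF : Measurable F) (C : ℝ) (hC : ∀ y, |F y| ≤ C) (m : ℝ)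
    (hm : ∀ y, m ≤ F y) {β₁ β₂ : ℝ} (hβ : β₁ ≤ β₂) :
    (∫ y, (F y - m) ^ 2 * exp (β₁ * F y) ∂ν) / ∫ y, exp (β₁ * F y) ∂ν ≤
      (∫ y, (F y - m) ^ 2 * exp (β₂ * F y) ∂ν) / ∫ y, exp (β₂ * F y) ∂ν := by
  set g : α → ℝ := fun y => (F y - m) ^ 2 with hg
  have hFb : ∀ β y, β * F y ≤ |β| * C := fun β y => by
    calc β * F y ≤ |β * F y| := le_abs_self _
    _ = |β| * |F y| := abs_mul _ _
    _ ≤ |β| * C := by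
        exact mul_le_mul_of_nonneg_left (hC y) (abs_nonneg β)
  have hIexp : ∀ β : ℝ, Integrable (fun y => exp (β * F y)) ν := fun β => by
    refine aux_integrable ν (by fun_prop) (exp (|β| * C)) fun y => ?_
    rw [abs_of_pos (exp_pos _)]
    exact exp_le_exp.2 (hFb β y)
  have hgb : ∀ y, |g y| ≤ (C + |m|) ^ 2 := fun y => by
    rw [hg, abs_pow]
    refine pow_le_pow_left₀ (abs_nonneg _) ?_ 2
    calc |F y - m| ≤ |F y| + |m| := abs_sub _ _
    _ ≤ C + |m| := by linarith [hC y]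
  have hIg : ∀ β : ℝ, Integrable (fun y => g y * exp (β * F y)) ν := fun β => by
    refine aux_integrable ν (by fun_prop) ((C + |m|) ^ 2 * exp (|β| * C)) fun y => ?_
    rw [abs_mul, abs_of_pos (exp_pos _)]
    exact mul_le_mul (hgb y) (exp_le_exp.2 (hFb β y)) (exp_pos _).le
      (sq_nonneg (C + |m|))
  have hZ : ∀ β : ℝ, 0 < ∫ y, exp (β * F y) ∂ν := fun β =>
    integral_exp_pos (hIexp β)
  rw [div_le_div_iff₀ (hZ β₁) (hZ β₂)]
  -- reduce to correlation inequality on the product measure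
  set P := ν.prod ν
  have hnn : ∀ z : α × α, 0 ≤ (g z.1 - g z.2) *
      (exp (β₂ * F z.1) * exp (β₁ * F z.2) - exp (β₁ * F z.1) * exp (β₂ * F z.2)) := by
    rintro ⟨y, y'⟩
    rcases le_total (F y') (F y) with h | h
    · refine mul_nonneg (sub_nonneg.2 ?_) (sub_nonneg.2 ?_)
      · exact pow_le_pow_left₀ (by linarith [hm y']) (by linarith) 2
      · rw [← exp_add, ← exp_add]
        exact exp_le_exp.2 (by nlinarith)
    · have h1 : g y - g y' ≤ 0 := sub_nonpos.2 (pow_le_pow_left₀ (by linarith [hm y]) (by linarith) 2)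
      have h2 : exp (β₂ * F y) * exp (β₁ * F y') - exp (β₁ * F y) * exp (β₂ * F y') ≤ 0 := by
        rw [sub_nonpos, ← exp_add, ← exp_add]
        exact exp_le_exp.2 (by nlinarith)
      nlinarith
  have hint : ∀ (u v : α → ℝ), Integrable u ν → Integrable v ν →
      Integrable (fun z : α × α => u z.1 * v z.2) P := fun u v hu hv => hu.mul_prod hv
  have expand : ∫ z : α × α, (g z.1 - g z.2) *
      (exp (β₂ * F z.1) * exp (β₁ * F z.2) - exp (β₁ * F z.1) * exp (β₂ * F z.2)) ∂P =
      2 * ((∫ y, g y * exp (β₂ * F y) ∂ν) * (∫ y, exp (β₁ * F y) ∂ν) -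
        (∫ y, g y * exp (β₁ * F y) ∂ν) * (∫ y, exp (β₂ * F y) ∂ν)) := by
    have h1 := hint _ _ (hIg β₂) (hIexp β₁)
    have h2 := hint _ _ (hIg β₁) (hIexp β₂)
    have h3 := hint _ _ (hIexp β₂) (hIg β₁)
    have h4 := hint _ _ (hIexp β₁) (hIg β₂)
    have heq : (fun z : α × α => (g z.1 - g z.2) *
        (exp (β₂ * F z.1) * exp (β₁ * F z.2) - exp (β₁ * F z.1) * exp (β₂ * F z.2))) =
        fun z : α × α => ((g z.1 * exp (β₂ * F z.1)) * exp (β₁ * F z.2) -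
          (g z.1 * exp (β₁ * F z.1)) * exp (β₂ * F z.2)) -
          (exp (β₂ * F z.1) * (g z.2 * exp (β₁ * F z.2)) -
            exp (β₁ * F z.1) * (g z.2 * exp (β₂ * F z.2))) := by
      funext z; ring
    have e1 : ∫ z : α × α, ((g z.1 * exp (β₂ * F z.1)) * exp (β₁ * F z.2) -
          (g z.1 * exp (β₁ * F z.1)) * exp (β₂ * F z.2)) -
          (exp (β₂ * F z.1) * (g z.2 * exp (β₁ * F z.2)) -
            exp (β₁ * F z.1) * (g z.2 * exp (β₂ * F z.2))) ∂P =
        (∫ z : α × α, (g z.1 * exp (β₂ * F z.1)) * exp (β₁ * F z.2) -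
          (g z.1 * exp (β₁ * F z.1)) * exp (β₂ * F z.2) ∂P) -
        ∫ z : α × α, exp (β₂ * F z.1) * (g z.2 * exp (β₁ * F z.2)) -
            exp (β₁ * F z.1) * (g z.2 * exp (β₂ * F z.2)) ∂P :=
      integral_sub (h1.sub h2) (h3.sub h4)
    have e2 : ∫ z : α × α, (g z.1 * exp (β₂ * F z.1)) * exp (β₁ * F z.2) -
          (g z.1 * exp (β₁ * F z.1)) * exp (β₂ * F z.2) ∂P =
        (∫ z : α × α, (g z.1 * exp (β₂ * F z.1)) * exp (β₁ * F z.2) ∂P) -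
        ∫ z : α × α, (g z.1 * exp (β₁ * F z.1)) * exp (β₂ * F z.2) ∂P :=
      integral_sub h1 h2
    have e3 : ∫ z : α × α, exp (β₂ * F z.1) * (g z.2 * exp (β₁ * F z.2)) -
            exp (β₁ * F z.1) * (g z.2 * exp (β₂ * F z.2)) ∂P =
        (∫ z : α × α, exp (β₂ * F z.1) * (g z.2 * exp (β₁ * F z.2)) ∂P) -
        ∫ z : α × α, exp (β₁ * F z.1) * (g z.2 * exp (β₂ * F z.2)) ∂P :=
      integral_sub h3 h4
    have p1 : ∫ z : α × α, (g z.1 * exp (β₂ * F z.1)) * exp (β₁ * F z.2) ∂P =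
        (∫ y, g y * exp (β₂ * F y) ∂ν) * ∫ y, exp (β₁ * F y) ∂ν :=
      integral_prod_mul (fun y => g y * exp (β₂ * F y)) (fun y => exp (β₁ * F y))
    have p2 : ∫ z : α × α, (g z.1 * exp (β₁ * F z.1)) * exp (β₂ * F z.2) ∂P =
        (∫ y, g y * exp (β₁ * F y) ∂ν) * ∫ y, exp (β₂ * F y) ∂ν :=
      integral_prod_mul (fun y => g y * exp (β₁ * F y)) (fun y => exp (β₂ * F y))
    have p3 : ∫ z : α × α, exp (β₂ * F z.1) * (g z.2 * exp (β₁ * F z.2)) ∂P =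
        (∫ y, exp (β₂ * F y) ∂ν) * ∫ y, g y * exp (β₁ * F y) ∂ν :=
      integral_prod_mul (fun y => exp (β₂ * F y)) (fun y => g y * exp (β₁ * F y))
    have p4 : ∫ z : α × α, exp (β₁ * F z.1) * (g z.2 * exp (β₂ * F z.2)) ∂P =
        (∫ y, exp (β₁ * F y) ∂ν) * ∫ y, g y * exp (β₂ * F y) ∂ν :=
      integral_prod_mul (fun y => exp (β₁ * F y)) (fun y => g y * exp (β₂ * F y))
    rw [heq, e1, e2, e3, p1, p2, p3, p4]
    ring
  have h0 : (0:ℝ) ≤ ∫ z : α × α, (g z.1 - g z.2) *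
      (exp (β₂ * F z.1) * exp (β₁ * F z.2) - exp (β₁ * F z.1) * exp (β₂ * F z.2)) ∂P :=
    integral_nonneg hnn
  rw [expand] at h0
  linarith

end KeyLemma

/-- Monotonicity of `β ↦ E_{k,βf}[(f − inf_k f)²](x)`. -/
theorem stmt_14 (μ : ∀ k, Measure (Ω k)) [∀ k, IsProbabilityMeasure (μ k)]
    (f : (∀ i, Ω i) → ℝ) (hf : Measurable f) (C : ℝ) (hC : ∀ x, |f x| ≤ C)
    (k : Fin n) (x : ∀ i, Ω i) :
    Monotone (fun β : ℝ =>
      condThermalExpK μ k β f (fun z => (f z - condInfK k f z) ^ 2) x) := by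
  intro β₁ β₂ hβ
  have hne : Nonempty (Ω k) := by
    by_contra h
    rw [not_nonempty_iff] at h
    have h1 := measure_univ (μ := μ k)
    rw [Set.univ_eq_empty_iff.2 h] at h1
    simp at h1
  set F : Ω k → ℝ := fun y => f (Function.update x k y) with hFdef
  have hFm : Measurable F := hf.comp (measurable_update x)
  set m : ℝ := ⨅ y, F y with hmdef
  have hm : ∀ y, m ≤ F y := fun y =>
    ciInf_le ⟨-C, by rintro a ⟨y', rfl⟩; linarith [abs_le.1 (hC (Function.update x k y'))]⟩ y
  have hkey := key_mono (μ k) F hFm C (fun y => hC _) m hm hβ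
  simp only [condThermalExpK, condInfK, Function.update_idem]
  exact hkey

end Statements
end
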